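/- Let n ≥ 2 be an integer and assume k_B > k_D ≥ 2k_Q > 0, k_B > k_P, and k_B k_Q ≤ k_D k_P. Then for every c ∈ (0,1) the inequality K_M(c) − K_N(c) + (n+1)·√((K_M(c)−K_N(c))² + 4K_M(c)K_P(c)) > 2K_D(c) holds; equivalently, n[K_M(c)−K_N(c)] + 2K_D(c) < 2(n+1)K_M(c)α(c). (This is the key inequality proved in Lemma 3.2; applied at c = c_s(0) it shows θ = f_p*(0)/v_s'(0) > 2, hence p_s'(r) = (c_0+o(1))r as r → 0⁺.) -/

import Mathlib

open Set Real

/-- Lemma 3.2 (key inequality): under `k_B > k_D ≥ 2k_Q > 0`, `k_B > k_P`,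
`k_B k_Q ≤ k_D k_P`, for every `c ∈ (0,1)` one has
`K_M(c) − K_N(c) + (n+1)√((K_M−K_N)² + 4 K_M K_P) > 2 K_D(c)`, equivalently
`n(K_M − K_N) + 2 K_D < 2(n+1) K_M α(c)`. -/
theorem stmt_1
    (n : ℕ) (hn : 2 ≤ n)
    (kB kD kP kQ : ℝ)
    (h1 : kB > kD) (h2 : kD ≥ 2 * kQ) (h3 : 0 < kQ) (h4 : kB > kP) (h5 : kB * kQ ≤ kD * kP)
    (KB KD KP KQ KM KN α : ℝ → ℝ)
    (hKB : KB = fun c => kB * c) (hKD : KD = fun c => kD * (1 - c))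
    (hKP : KP = fun c => kP * c) (hKQ : KQ = fun c => kQ * (1 - c))
    (hKM : KM = fun c => KB c + KD c) (hKN : KN = fun c => KP c + KQ c)
    (hα : α = fun c =>
      (KM c - KN c + Real.sqrt ((KM c - KN c) ^ 2 + 4 * KM c * KP c)) / (2 * KM c)) :
    ∀ c ∈ Ioo (0:ℝ) 1,
      KM c - KN c + (n + 1) * Real.sqrt ((KM c - KN c) ^ 2 + 4 * KM c * KP c) > 2 * KD c ∧
      n * (KM c - KN c) + 2 * KD c < 2 * (n + 1) * KM c * α c := by
  subst hα hKN hKM hKQ hKP hKD hKB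
  intro c hc
  obtain ⟨hc0, hc1⟩ := hc
  simp only
  have hkD : 0 < kD := lt_of_lt_of_le (by linarith) h2
  have hkP : 0 < kP := by nlinarith
  have h1c : 0 < 1 - c := by linarith
  set D : ℝ := kB * c + kD * (1 - c) - (kP * c + kQ * (1 - c)) with hD
  have hDpos : 0 < D := by nlinarith
  have hKMpos : 0 < kB * c + kD * (1 - c) := by nlinarith
  have hKPpos : 0 < kP * c := by positivity
  have hS : D < Real.sqrt (D ^ 2 + 4 * (kB * c + kD * (1 - c)) * (kP * c)) := by
    rw [show D < Real.sqrt (D ^ 2 + 4 * (kB * c + kD * (1 - c)) * (kP * c)) ↔ _ from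
      Real.lt_sqrt hDpos.le]
    nlinarith
  set S : ℝ := Real.sqrt (D ^ 2 + 4 * (kB * c + kD * (1 - c)) * (kP * c)) with hSdef
  have hn' : (2:ℝ) ≤ (n:ℝ) := by exact_mod_cast hn
  have h2D : kD * (1 - c) ≤ 2 * D := by nlinarith
  have hfirst : D + ((n:ℝ) + 1) * S > 2 * (kD * (1 - c)) := by nlinarith
  refine ⟨hfirst, ?_⟩
  have hα2 : 2 * ((n:ℝ) + 1) * (kB * c + kD * (1 - c)) *
      ((D + S) / (2 * (kB * c + kD * (1 - c)))) = ((n:ℝ) + 1) * (D + S) := by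
    field_simp
  rw [hα2]
  nlinarith
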